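/- For any non-scattered compact Hausdorff space K, the space C_p(K) has property (B). -/

import Mathlib

/-- A topological space is scattered if every nonempty subset `S` contains a point
isolated in `S`. -/
def Scattered (X : Type*) [TopologicalSpace X] : Prop :=
  ∀ S : Set X, S.Nonempty → ∃ x ∈ S, ∃ U : Set X, IsOpen U ∧ U ∩ S = {x}

/-- A topological space `X` has property (B) if it can be covered by countably many closed
nowhere-dense sets `A n` such that every compact subset of `X` is contained in some `A n`. -/
def PropertyB (X : Type*) [TopologicalSpace X] : Prop :=
  ∃ A : ℕ → Set X,
    (∀ n, IsClosed (A n)) ∧ (∀ n, interior (A n) = ∅) ∧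
    (⋃ n, A n) = Set.univ ∧
    ∀ C : Set X, IsCompact C → ∃ n, C ⊆ A n

/-- The topology of pointwise convergence on `C(K, ℝ)`. -/
noncomputable def pointwiseTopology (K : Type*) [TopologicalSpace K] :
    TopologicalSpace C(K, ℝ) :=
  TopologicalSpace.induced (fun f : C(K, ℝ) => (f : K → ℝ)) Pi.topologicalSpace


section Aux

open Set Topology Filter

set_option linter.unusedSectionVars false
set_option linter.unusedVariables false

variable {K : Type*} [TopologicalSpace K] [CompactSpace K] [T2Space K]

/-- From a set with no relatively isolated points, each open set meeting it can be split into
two open subsets meeting it, with disjoint closures. -/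
lemma exists_children (S : Set K) (hS : ∀ x ∈ S, ∀ U : Set K, IsOpen U → U ∩ S ≠ {x})
    (V : Set K) (hV : IsOpen V) (hne : (V ∩ S).Nonempty) :
    ∃ W : Bool → Set K, (∀ b, IsOpen (W b)) ∧ (∀ b, (W b ∩ S).Nonempty) ∧
      (∀ b, W b ⊆ V) ∧ Disjoint (closure (W false)) (closure (W true)) := by
  obtain ⟨y, hyV, hyS⟩ := hne
  have hne2 : ∃ z ∈ V ∩ S, z ≠ y := by
    by_contra hcon
    push_neg at hcon
    apply hS y hyS V hV
    apply Subset.antisymm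
    · intro z hz; exact hcon z hz
    · intro z hz; simp only [mem_singleton_iff] at hz; subst hz; exact ⟨hyV, hyS⟩
  obtain ⟨z, ⟨hzV, hzS⟩, hzy⟩ := hne2
  -- Urysohn between {y} and {z}
  obtain ⟨u, hu0, hu1, -⟩ := exists_continuous_zero_one_of_isClosed
    (isClosed_singleton (x := y)) (isClosed_singleton (x := z))
    (by simpa [disjoint_singleton] using (Ne.symm hzy))
  refine ⟨fun b => if b then V ∩ u ⁻¹' (Ioi (2/3 : ℝ)) else V ∩ u ⁻¹' (Iio (1/3 : ℝ)),
    ?_, ?_, ?_, ?_⟩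
  · intro b
    cases b
    · exact hV.inter (isOpen_Iio.preimage u.continuous)
    · exact hV.inter (isOpen_Ioi.preimage u.continuous)
  · intro b
    cases b
    · refine ⟨y, ⟨hyV, ?_⟩, hyS⟩
      have : u y = 0 := hu0 (mem_singleton y)
      simp only [mem_preimage, this, mem_Iio]
      norm_num
    · refine ⟨z, ⟨hzV, ?_⟩, hzS⟩
      have : u z = 1 := hu1 (mem_singleton z)
      simp only [mem_preimage, this, mem_Ioi]
      norm_num
  · intro b; cases b <;> exact inter_subset_left
  · have h1 : closure (V ∩ u ⁻¹' (Iio (1/3 : ℝ))) ⊆ u ⁻¹' (Iic (1/3 : ℝ)) := by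
      refine (closure_mono inter_subset_right).trans ?_
      refine (u.continuous.closure_preimage_subset _).trans ?_
      rw [closure_Iio]
    have h2 : closure (V ∩ u ⁻¹' (Ioi (2/3 : ℝ))) ⊆ u ⁻¹' (Ici (2/3 : ℝ)) := by
      refine (closure_mono inter_subset_right).trans ?_
      refine (u.continuous.closure_preimage_subset _).trans ?_
      rw [closure_Ioi]
    simp only [Bool.cond_false, Bool.cond_true, if_false, if_true]
    exact Disjoint.mono h1 h2 (by
      refine Disjoint.preimage u ?_
      rw [Set.disjoint_iff]
      intro t ⟨ht1, ht2⟩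
      simp only [mem_Iic, mem_Ici] at ht1 ht2
      linarith)


section Tree

variable (S : Set K) (hS : ∀ x ∈ S, ∀ U : Set K, IsOpen U → U ∩ S ≠ {x}) (hSne : S.Nonempty)

/-- The binary tree of open sets. `cell (b :: s)` is the `b`-child of `cell s`. -/
noncomputable def cell : List Bool → {V : Set K // IsOpen V ∧ (V ∩ S).Nonempty}
  | [] => ⟨univ, isOpen_univ, by simpa using hSne⟩
  | b :: s =>
    ⟨(exists_children S hS (cell s).1 (cell s).2.1 (cell s).2.2).choose b,
     (exists_children S hS (cell s).1 (cell s).2.1 (cell s).2.2).choose_spec.1 b,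
     (exists_children S hS (cell s).1 (cell s).2.1 (cell s).2.2).choose_spec.2.1 b⟩

lemma cell_sub (b : Bool) (s : List Bool) :
    (cell S hS hSne (b :: s)).1 ⊆ (cell S hS hSne s).1 := by
  simp only [cell]
  exact (exists_children S hS (cell S hS hSne s).1 (cell S hS hSne s).2.1
    (cell S hS hSne s).2.2).choose_spec.2.2.1 b

lemma cell_disj (s : List Bool) :
    Disjoint (closure (cell S hS hSne (false :: s)).1)
      (closure (cell S hS hSne (true :: s)).1) := by
  simp only [cell]
  exact (exists_children S hS (cell S hS hSne s).1 (cell S hS hSne s).2.1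
    (cell S hS hSne s).2.2).choose_spec.2.2.2

lemma cell_closure_sub (b : Bool) (s : List Bool) :
    closure (cell S hS hSne (b :: s)).1 ⊆ closure (cell S hS hSne s).1 :=
  closure_mono (cell_sub S hS hSne b s)

/-- cells of the same depth have disjoint closures. -/
lemma cell_pairwise : ∀ s t : List Bool, s.length = t.length → s ≠ t →
    Disjoint (closure (cell S hS hSne s).1) (closure (cell S hS hSne t).1) := by
  intro s
  induction s with
  | nil =>
    intro t hlen hne
    cases t with
    | nil => exact absurd rfl hne
    | cons c t' => simp at hlen
  | cons b s' ih =>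
    intro t hlen hne
    cases t with
    | nil => simp at hlen
    | cons c t' =>
      simp only [List.length_cons, Nat.add_right_cancel_iff] at hlen
      by_cases hst : s' = t'
      · subst hst
        have hbc : b ≠ c := by
          intro h; exact hne (by rw [h])
        cases b <;> cases c
        · exact absurd rfl hbc
        · exact cell_disj S hS hSne s'
        · exact (cell_disj S hS hSne s').symm
        · exact absurd rfl hbc
      · exact Disjoint.mono (cell_closure_sub S hS hSne b s')
          (cell_closure_sub S hS hSne c t') (ih t' hlen hst)

lemma finite_length_eq (n : ℕ) : {l : List Bool | l.length = n}.Finite := by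
  induction n with
  | zero =>
    convert Set.finite_singleton ([] : List Bool) using 1
    ext l; simp [List.length_eq_zero_iff]
  | succ n ih =>
    have : {l : List Bool | l.length = n + 1} ⊆
        Set.image2 List.cons (univ : Set Bool) {l : List Bool | l.length = n} := by
      intro l hl
      cases l with
      | nil => simp at hl
      | cons b t =>
        refine ⟨b, mem_univ b, t, ?_, rfl⟩
        simpa using hl
    exact (Set.Finite.image2 _ finite_univ ih).subset this

/-- the `n`-th level 0-side and 1-side unions -/
noncomputable def sideSet (b : Bool) (n : ℕ) : Set K :=
  ⋃ s ∈ {l : List Bool | l.length = n}, closure (cell S hS hSne (b :: s)).1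

lemma sideSet_closed (b : Bool) (n : ℕ) : IsClosed (sideSet S hS hSne b n) :=
  (finite_length_eq n).isClosed_biUnion (fun _ _ => isClosed_closure)

lemma sideSet_disj (n : ℕ) :
    Disjoint (sideSet S hS hSne false n) (sideSet S hS hSne true n) := by
  rw [Set.disjoint_iff]
  rintro x ⟨hx0, hx1⟩
  simp only [sideSet, mem_iUnion, mem_setOf_eq] at hx0 hx1
  obtain ⟨s, hs, hxs⟩ := hx0
  obtain ⟨t, ht, hxt⟩ := hx1
  have : (false :: s) ≠ (true :: t) := by simp
  have hlen : (false :: s).length = (true :: t).length := by simp [hs, ht]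
  exact (cell_pairwise S hS hSne _ _ hlen this).le_bot ⟨hxs, hxt⟩

/-- The `n`-th separating Urysohn function. -/
noncomputable def lvl (n : ℕ) : C(K, ℝ) :=
  (exists_continuous_zero_one_of_isClosed (sideSet_closed S hS hSne false n)
    (sideSet_closed S hS hSne true n) (sideSet_disj S hS hSne n)).choose

lemma lvl_spec (n : ℕ) :
    EqOn (lvl S hS hSne n) 0 (sideSet S hS hSne false n) ∧
    EqOn (lvl S hS hSne n) 1 (sideSet S hS hSne true n) ∧
    ∀ x, (lvl S hS hSne n) x ∈ Icc (0:ℝ) 1 :=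
  (exists_continuous_zero_one_of_isClosed (sideSet_closed S hS hSne false n)
    (sideSet_closed S hS hSne true n) (sideSet_disj S hS hSne n)).choose_spec

end Tree

section Tree2

variable (S : Set K) (hS : ∀ x ∈ S, ∀ U : Set K, IsOpen U → U ∩ S ≠ {x}) (hSne : S.Nonempty)

lemma cell_in_side {n : ℕ} (b : Bool) (s : List Bool) (h : s.length = n) :
    closure (cell S hS hSne (b :: s)).1 ⊆ sideSet S hS hSne b n :=
  subset_biUnion_of_mem (u := fun s => closure (cell S hS hSne (b :: s)).1) h

/-- The continuous map built from the tree. -/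
noncomputable def treeFun : K → ℝ := fun x => ∑' n, (1/2 : ℝ)^(n+1) * lvl S hS hSne n x

lemma summable_half : Summable (fun n : ℕ => (1/2 : ℝ)^(n+1)) := by
  have h := (summable_geometric_of_lt_one (by norm_num : (0:ℝ) ≤ 1/2)
    (by norm_num : (1/2:ℝ) < 1)).mul_right (1/2 : ℝ)
  refine h.congr fun n => ?_
  rw [pow_succ]

lemma treeFun_continuous : Continuous (treeFun S hS hSne) := by
  refine continuous_tsum (fun n => continuous_const.mul (lvl S hS hSne n).continuous)
    summable_half (fun n x => ?_)
  have h := (lvl_spec S hS hSne n).2.2 x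
  rw [Real.norm_eq_abs, abs_mul, abs_of_nonneg (by positivity : (0:ℝ) ≤ (1/2:ℝ)^(n+1))]
  calc (1/2:ℝ)^(n+1) * |(lvl S hS hSne n) x| ≤ (1/2:ℝ)^(n+1) * 1 := by
        apply mul_le_mul_of_nonneg_left _ (by positivity)
        rw [abs_of_nonneg h.1]; exact h.2
    _ = (1/2:ℝ)^(n+1) := mul_one _

/-- reversed prefix of a branch -/
def pre (σ : ℕ → Bool) : ℕ → List Bool
  | 0 => []
  | n + 1 => σ n :: pre σ n

lemma pre_length (σ : ℕ → Bool) (n : ℕ) : (pre σ n).length = n := by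
  induction n with
  | zero => rfl
  | succ n ih => simp [pre, ih]

lemma branch_nonempty (σ : ℕ → Bool) :
    (⋂ n, closure (cell S hS hSne (pre σ n)).1).Nonempty := by
  apply IsCompact.nonempty_iInter_of_sequence_nonempty_isCompact_isClosed
  · intro i
    exact cell_closure_sub S hS hSne (σ i) (pre σ i)
  · intro i
    obtain ⟨y, hy, -⟩ := (cell S hS hSne (pre σ i)).2.2
    exact ⟨y, subset_closure hy⟩
  · exact isClosed_closure.isCompact
  · exact fun i => isClosed_closure

lemma lvl_branch (σ : ℕ → Bool) (x : K) (hx : x ∈ ⋂ n, closure (cell S hS hSne (pre σ n)).1)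
    (n : ℕ) : lvl S hS hSne n x = bif σ n then 1 else 0 := by
  have hxn : x ∈ closure (cell S hS hSne (pre σ (n+1))).1 := mem_iInter.1 hx (n+1)
  have hside : x ∈ sideSet S hS hSne (σ n) n := by
    apply cell_in_side S hS hSne (σ n) (pre σ n) (pre_length σ n)
    exact hxn
  cases hσ : σ n
  · rw [hσ] at hside
    simpa using (lvl_spec S hS hSne n).1 hside
  · rw [hσ] at hside
    simpa using (lvl_spec S hS hSne n).2.1 hside

/-- The image of `treeFun` contains `[0,1]`. -/
lemma treeFun_surj : Icc (0:ℝ) 1 ⊆ range (treeFun S hS hSne) := by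
  rintro t ⟨ht0, ht1⟩
  -- greedy binary approximation
  let P : ℕ → ℝ := fun n => Nat.rec (0 : ℝ)
    (fun n p => p + (if p + (1/2 : ℝ)^(n+1) ≤ t then (1/2 : ℝ)^(n+1) else 0)) n
  have hP0 : P 0 = 0 := rfl
  have hPsucc : ∀ n, P (n+1) = P n + (if P n + (1/2 : ℝ)^(n+1) ≤ t then (1/2 : ℝ)^(n+1) else 0) :=
    fun n => rfl
  set σ : ℕ → Bool := fun n => decide (P n + (1/2 : ℝ)^(n+1) ≤ t) with hσdef
  have key : ∀ n, P n ≤ t ∧ t ≤ P n + (1/2 : ℝ)^n := by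
    intro n
    induction n with
    | zero => simpa [hP0] using ⟨ht0, ht1⟩
    | succ n ih =>
      rw [hPsucc]
      by_cases hc : P n + (1/2 : ℝ)^(n+1) ≤ t
      · rw [if_pos hc]
        constructor
        · exact hc
        · have : (1/2 : ℝ)^n = (1/2 : ℝ)^(n+1) + (1/2 : ℝ)^(n+1) := by ring
          nlinarith [ih.2]
      · rw [if_neg hc, add_zero]
        push_neg at hc
        exact ⟨ih.1, le_of_lt hc⟩
  -- partial sums of the target series equal P n
  have hsum : ∀ n, P n = ∑ k ∈ Finset.range n, (1/2 : ℝ)^(k+1) * (bif σ k then 1 else 0) := by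
    intro n
    induction n with
    | zero => simp [hP0]
    | succ n ih =>
      rw [Finset.sum_range_succ, ← ih, hPsucc]
      by_cases hc : P n + (1/2 : ℝ)^(n+1) ≤ t
      · have hσn : σ n = true := decide_eq_true hc
        rw [if_pos hc, hσn]; simp
      · have hσn : σ n = false := decide_eq_false hc
        rw [if_neg hc, hσn]; simp
  -- x on the branch σ
  obtain ⟨x, hx⟩ := branch_nonempty S hS hSne σ
  refine ⟨x, ?_⟩
  have hval : ∀ n, (1/2 : ℝ)^(n+1) * lvl S hS hSne n x
      = (1/2 : ℝ)^(n+1) * (bif σ n then 1 else 0) := by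
    intro n; rw [lvl_branch S hS hSne σ x hx n]
  have hHasSum : HasSum (fun n => (1/2 : ℝ)^(n+1) * (bif σ n then 1 else 0)) t := by
    rw [hasSum_iff_tendsto_nat_of_nonneg]
    · -- partial sums → t
      have heq : (fun n => ∑ k ∈ Finset.range n, (1/2 : ℝ)^(k+1) * (bif σ k then 1 else 0))
          = fun n => P n := by
        funext n; rw [hsum]
      rw [heq]
      -- squeeze
      have h1 : Tendsto (fun n : ℕ => t - (1/2 : ℝ)^n) atTop (nhds t) := by
        have := tendsto_pow_atTop_nhds_zero_of_lt_one (by norm_num : (0:ℝ) ≤ 1/2)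
          (by norm_num : (1/2 : ℝ) < 1)
        simpa using (tendsto_const_nhds (x := t)).sub this
      apply tendsto_of_tendsto_of_tendsto_of_le_of_le h1 tendsto_const_nhds
      · intro n
        have := (key n).2
        linarith
      · intro n
        exact (key n).1
    · intro n
      cases h : σ n <;> simp
  calc treeFun S hS hSne x = ∑' n, (1/2 : ℝ)^(n+1) * (bif σ n then 1 else 0) := by
        unfold treeFun; congr 1; funext n; exact hval n
    _ = t := hHasSum.tsum_eq



end Tree2

/-- A minimal closed subset whose image still contains `[0,1]`. -/
lemma exists_minimal_closed (f : K → ℝ) (hf : Continuous f) (hr : Icc (0:ℝ) 1 ⊆ range f) :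
    ∃ L : Set K, IsClosed L ∧ L.Nonempty ∧ Icc (0:ℝ) 1 ⊆ f '' L ∧
      ∀ F : Set K, IsClosed F → F ⊆ L → Icc (0:ℝ) 1 ⊆ f '' F → F = L := by
  set 𝒮 : Set (Set K) := {F | IsClosed F ∧ Icc (0:ℝ) 1 ⊆ f '' F} with h𝒮
  have hintersect : ∀ c ⊆ 𝒮, IsChain (· ⊆ ·) c → c.Nonempty →
      ∃ lb ∈ 𝒮, ∀ s ∈ c, lb ⊆ s := by
    intro c hc hchain hcne
    refine ⟨⋂₀ c, ⟨isClosed_sInter (fun F hF => (hc hF).1), ?_⟩, fun s hs => sInter_subset_of_mem hs⟩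
    intro t ht
    haveI : Nonempty ↥c := hcne.to_subtype
    -- the fibers over t within the members of the chain
    have hne : (⋂ F : ↥c, (F.1 ∩ f ⁻¹' {t})).Nonempty := by
      apply IsCompact.nonempty_iInter_of_directed_nonempty_isCompact_isClosed
      · intro F G
        rcases hchain.total F.2 G.2 with hFG | hGF
        · exact ⟨F, Subset.rfl, inter_subset_inter_left _ hFG⟩
        · exact ⟨G, inter_subset_inter_left _ hGF, Subset.rfl⟩
      · intro F
        obtain ⟨x, hxF, hfx⟩ := (hc F.2).2 ht
        exact ⟨x, hxF, by simpa using hfx⟩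
      · intro F
        exact (((hc F.2).1.inter (isClosed_singleton.preimage hf))).isCompact
      · intro F
        exact (hc F.2).1.inter (isClosed_singleton.preimage hf)
    obtain ⟨x, hx⟩ := hne
    simp only [mem_iInter, mem_inter_iff, mem_preimage, mem_singleton_iff] at hx
    refine ⟨x, ?_, (hx ⟨_, hcne.choose_spec⟩).2⟩
    rw [mem_sInter]
    intro F hF
    exact (hx ⟨F, hF⟩).1
  have huniv : univ ∈ 𝒮 := ⟨isClosed_univ, by
    intro t ht
    obtain ⟨x, hx⟩ := hr ht
    exact ⟨x, mem_univ x, hx⟩⟩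
  obtain ⟨L, -, hLmem, hLmin⟩ := zorn_superset_nonempty 𝒮 hintersect univ huniv
  refine ⟨L, hLmem.1, ?_, hLmem.2, ?_⟩
  · obtain ⟨x, hxL, -⟩ := hLmem.2 (left_mem_Icc.2 (by norm_num : (0:ℝ) ≤ 1))
    exact ⟨x, hxL⟩
  · intro F hFc hFL hFr
    exact le_antisymm hFL (hLmin ⟨hFc, hFr⟩ hFL)


/-- validity of a rational pair for our purposes -/
def validP (p : ℚ × ℚ) : Prop := p.1 < p.2 ∧ p.1 < 1 ∧ 0 < p.2

instance : DecidablePred validP := fun p => by unfold validP; infer_instance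

/-- validization -/
def vp (p : ℚ × ℚ) : ℚ × ℚ := if validP p then p else (0, 1)

lemma vp_valid (p : ℚ × ℚ) : validP (vp p) := by
  unfold vp
  split
  · assumption
  · exact ⟨by norm_num, by norm_num, by norm_num⟩

lemma vp_of_valid {p : ℚ × ℚ} (h : validP p) : vp p = p := if_pos h

variable {K : Type*} [TopologicalSpace K] [CompactSpace K] [T2Space K]

lemma pw_coe_continuous :
    @Continuous C(K, ℝ) (K → ℝ) (pointwiseTopology K) Pi.topologicalSpace
      (fun f : C(K, ℝ) => (f : K → ℝ)) := by
  unfold pointwiseTopology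
  exact continuous_induced_dom

lemma pw_eval_continuous (x : K) :
    @Continuous C(K, ℝ) ℝ (pointwiseTopology K) _ (fun f => f x) :=
  @Continuous.comp C(K, ℝ) (K → ℝ) ℝ (pointwiseTopology K) Pi.topologicalSpace _ _ _
    (continuous_apply x) pw_coe_continuous

lemma pw_nhds (g : C(K, ℝ)) :
    @nhds _ (pointwiseTopology K) g
      = Filter.comap (fun f : C(K, ℝ) => (f : K → ℝ)) (nhds (g : K → ℝ)) := by
  rw [pointwiseTopology]
  exact nhds_induced _ _

/-- the basic closed sets -/
def Bset (L : Set K) (f₀ : K → ℝ) (q r : ℚ) (j : ℕ) : Set C(K, ℝ) :=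
  {g : C(K, ℝ) | ∀ x ∈ L, (q : ℝ) < f₀ x → f₀ x < (r : ℝ) → |g x| ≤ (j : ℝ)}

lemma Bset_closed (L : Set K) (f₀ : K → ℝ) (q r : ℚ) (j : ℕ) :
    @IsClosed C(K, ℝ) (pointwiseTopology K) (Bset L f₀ q r j) := by
  letI : TopologicalSpace C(K, ℝ) := pointwiseTopology K
  have : Bset L f₀ q r j = ⋂ (x : K) (_ : x ∈ L ∧ (q : ℝ) < f₀ x ∧ f₀ x < (r : ℝ)),
      (fun g : C(K, ℝ) => g x) ⁻¹' (Icc (-(j:ℝ)) (j:ℝ)) := by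
    ext g
    simp only [Bset, mem_setOf_eq, mem_iInter, mem_preimage, mem_Icc, ← abs_le]
    constructor
    · intro hg x hx
      exact hg x hx.1 hx.2.1 hx.2.2
    · intro hg x hx h1 h2
      exact hg x ⟨hx, h1, h2⟩
  rw [this]
  exact isClosed_iInter fun x => isClosed_iInter fun _ =>
    IsClosed.preimage (pw_eval_continuous x) isClosed_Icc

lemma Bset_interior (L : Set K) (hLc : IsClosed L) (f₀ : K → ℝ)
    (hLr : Icc (0:ℝ) 1 ⊆ f₀ '' L) (q r : ℚ) (j : ℕ) (hp : validP (q, r)) :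
    @interior C(K, ℝ) (pointwiseTopology K) (Bset L f₀ q r j) = ∅ := by
  letI : TopologicalSpace C(K, ℝ) := pointwiseTopology K
  rw [eq_empty_iff_forall_notMem]
  intro g hg
  rw [mem_interior_iff_mem_nhds, pw_nhds, Filter.mem_comap] at hg
  obtain ⟨T, hT, hTsub⟩ := hg
  rw [nhds_pi, Filter.mem_pi] at hT
  obtain ⟨I, hIfin, t, ht, hIpi⟩ := hT
  -- find a point of the slab avoiding I
  set a : ℝ := max (q : ℝ) 0 with ha
  set b : ℝ := min (r : ℝ) 1 with hb
  have hab : a < b := by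
    apply max_lt
    · exact lt_min (by exact_mod_cast hp.1) (by exact_mod_cast hp.2.1)
    · exact lt_min (by exact_mod_cast hp.2.2) one_pos
  have hinf : (Ioo a b).Infinite := Set.Ioo_infinite hab
  obtain ⟨ts, hts⟩ := (hinf.diff (hIfin.image f₀)).nonempty
  have htsIcc : ts ∈ Icc (0:ℝ) 1 := by
    constructor
    · exact le_of_lt (lt_of_le_of_lt (le_max_right _ 0) hts.1.1)
    · exact le_of_lt (lt_of_lt_of_le hts.1.2 (min_le_right _ 1))
  obtain ⟨x₀, hx₀L, hfx₀⟩ := hLr htsIcc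
  have hx₀I : x₀ ∉ I := by
    intro hmem
    exact hts.2 ⟨x₀, hmem, hfx₀⟩
  -- Urysohn bump
  obtain ⟨β, hβ0, hβ1, -⟩ := exists_continuous_zero_one_of_isClosed
    hIfin.isClosed isClosed_singleton (disjoint_singleton_right.2 hx₀I)
  set c : ℝ := (j : ℝ) + 1 + |g x₀| with hc
  set hfun : C(K, ℝ) := g + c • β with hhfun
  have hmem : hfun ∈ Bset L f₀ q r j := by
    apply hTsub
    rw [mem_preimage]
    apply hIpi
    rw [Set.mem_pi]
    intro x hxI
    have : β x = 0 := hβ0 hxI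
    have hval : hfun x = g x := by
      simp [hhfun, this]
    rw [hval]
    exact mem_of_mem_nhds (ht x)
  -- contradiction at x₀
  have hβx₀ : β x₀ = 1 := hβ1 rfl
  have hvx₀ : hfun x₀ = g x₀ + c := by simp [hhfun, hβx₀]
  have hle := hmem x₀ hx₀L (by rw [hfx₀]; exact lt_of_le_of_lt (le_max_left _ _) hts.1.1)
    (by rw [hfx₀]; exact lt_of_lt_of_le hts.1.2 (min_le_left _ _))
  rw [hvx₀] at hle
  have h1 : g x₀ + c ≥ (j : ℝ) + 1 := by
    have := neg_abs_le (g x₀)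
    rw [hc]; linarith
  have h2 : |g x₀ + c| ≥ g x₀ + c := le_abs_self _
  linarith

lemma Bset_covers (L : Set K) (f₀ : K → ℝ) (g : C(K, ℝ)) :
    ∃ j : ℕ, g ∈ Bset L f₀ 0 1 j := by
  -- g is bounded on the compact space K
  obtain ⟨b, hb⟩ := (isCompact_univ.image (continuous_abs.comp g.continuous)).bddAbove
  obtain ⟨j, hj⟩ := exists_nat_ge b
  refine ⟨j, fun x hx h1 h2 => ?_⟩
  have : |g x| ≤ b := hb ⟨x, mem_univ x, rfl⟩
  linarith

/-- the swallowing property -/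
lemma Bset_swallows (L : Set K) (hLc : IsClosed L) (hLne : L.Nonempty) (f₀ : K → ℝ)
    (hf₀c : Continuous f₀) (hLr : Icc (0:ℝ) 1 ⊆ f₀ '' L)
    (hLmin : ∀ F : Set K, IsClosed F → F ⊆ L → Icc (0:ℝ) 1 ⊆ f₀ '' F → F = L)
    (C : Set C(K, ℝ)) (hC : @IsCompact _ (pointwiseTopology K) C) :
    ∃ (q r : ℚ) (j : ℕ), validP (q, r) ∧ C ⊆ Bset L f₀ q r j := by
  classical
  -- the sets where all members of C are bounded by j, inside the subtype L
  set E : ℕ → Set ↥L := fun j => {x : ↥L | ∀ g ∈ C, |g x.1| ≤ (j : ℝ)} with hE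
  have hEclosed : ∀ j, IsClosed (E j) := by
    intro j
    have : E j = ⋂ g ∈ C, (fun x : ↥L => |g x.1|) ⁻¹' (Iic (j : ℝ)) := by
      ext x
      simp [hE]
    rw [this]
    refine isClosed_biInter fun g _ => IsClosed.preimage ?_ isClosed_Iic
    exact continuous_abs.comp (g.continuous.comp continuous_subtype_val)
  have hEcover : ⋃ j, E j = univ := by
    rw [eq_univ_iff_forall]
    intro x
    -- the evaluation image of C at x is compact, hence bounded
    have hcomp : IsCompact ((fun g : C(K, ℝ) => |g x.1|) '' C) := by
      have hcont : @Continuous C(K, ℝ) ℝ (pointwiseTopology K) _ (fun g => |g x.1|) :=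
        @Continuous.comp C(K, ℝ) ℝ ℝ (pointwiseTopology K) _ _ _ _
          continuous_abs (pw_eval_continuous x.1)
      exact @IsCompact.image C(K, ℝ) ℝ (pointwiseTopology K) _ C _ hC hcont
    obtain ⟨b, hb⟩ := hcomp.bddAbove
    obtain ⟨j, hj⟩ := exists_nat_ge b
    refine mem_iUnion.2 ⟨j, fun g hg => ?_⟩
    have : |g x.1| ≤ b := hb ⟨g, hg, rfl⟩
    linarith
  -- Baire category on the compact space L
  haveI : CompactSpace ↥L := isCompact_iff_compactSpace.mp hLc.isCompact
  haveI : Nonempty ↥L := hLne.to_subtype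
  obtain ⟨j₀, y, hy⟩ := nonempty_interior_of_iUnion_of_closed hEclosed hEcover
  -- translate the interior to an open set of K
  rw [mem_interior] at hy
  obtain ⟨U, hUsub, hUopen, hyU⟩ := hy
  obtain ⟨O, hOopen, hOpre⟩ := isOpen_induced_iff.1 hUopen
  -- the proper closed subset
  set V : Set K := L ∩ Oᶜ with hV
  have hVclosed : IsClosed V := hLc.inter hOopen.isClosed_compl
  have hVsub : V ⊆ L := inter_subset_left
  have hVproper : ¬ (Icc (0:ℝ) 1 ⊆ f₀ '' V) := by
    intro hcon
    have : V = L := hLmin V hVclosed hVsub hcon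
    have hyO : (y : K) ∈ O := by
      have : y ∈ Subtype.val ⁻¹' O := by rw [hOpre]; exact hyU
      exact this
    have hyV : (y : K) ∈ V := by rw [this]; exact y.2
    exact hyV.2 hyO
  rw [not_subset] at hVproper
  obtain ⟨ts, htsIcc, htsV⟩ := hVproper
  -- f₀ '' V is compact and closed, find a rational interval around ts avoiding it
  have hVcomp : IsCompact (f₀ '' V) := (hVclosed.isCompact).image hf₀c
  have hVim_closed : IsClosed (f₀ '' V) := hVcomp.isClosed
  have : (f₀ '' V)ᶜ ∈ nhds ts := hVim_closed.isOpen_compl.mem_nhds htsV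
  obtain ⟨ε, hε, hball⟩ := Metric.mem_nhds_iff.1 this
  obtain ⟨q, hq1, hq2⟩ := exists_rat_btwn (by linarith : ts - ε < ts)
  obtain ⟨r, hr1, hr2⟩ := exists_rat_btwn (by linarith : ts < ts + ε)
  have hvalid : validP (q, r) := by
    refine ⟨?_, ?_, ?_⟩
    · exact_mod_cast lt_trans hq2 hr1
    · exact_mod_cast lt_of_lt_of_le hq2 htsIcc.2
    · exact_mod_cast lt_of_le_of_lt htsIcc.1 hr1
  refine ⟨q, r, j₀, hvalid, ?_⟩
  intro g hg x hxL hq hr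
  -- x is in the good region O
  have hxO : x ∈ O := by
    by_contra hxO
    have hxV : x ∈ V := ⟨hxL, hxO⟩
    have : f₀ x ∈ f₀ '' V := ⟨x, hxV, rfl⟩
    apply hball _ this
    rw [Metric.mem_ball, Real.dist_eq, abs_lt]
    constructor <;> [linarith; linarith]
  have hxE : (⟨x, hxL⟩ : ↥L) ∈ E j₀ := by
    apply hUsub
    rw [← hOpre]
    exact hxO
  exact hxE g hg

lemma core (L : Set K) (hLc : IsClosed L) (hLne : L.Nonempty) (f₀ : K → ℝ)
    (hf₀c : Continuous f₀) (hLr : Icc (0:ℝ) 1 ⊆ f₀ '' L)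
    (hLmin : ∀ F : Set K, IsClosed F → F ⊆ L → Icc (0:ℝ) 1 ⊆ f₀ '' F → F = L) :
    @PropertyB C(K, ℝ) (pointwiseTopology K) := by
  classical
  refine ⟨fun n => Bset L f₀
      (vp (((Denumerable.eqv (ℚ × ℚ × ℕ)).symm n).1,
        ((Denumerable.eqv (ℚ × ℚ × ℕ)).symm n).2.1)).1
      (vp (((Denumerable.eqv (ℚ × ℚ × ℕ)).symm n).1,
        ((Denumerable.eqv (ℚ × ℚ × ℕ)).symm n).2.1)).2
      ((Denumerable.eqv (ℚ × ℚ × ℕ)).symm n).2.2, ?_, ?_, ?_, ?_⟩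
  · intro n
    exact Bset_closed L f₀ _ _ _
  · intro n
    apply Bset_interior L hLc f₀ hLr
    have := vp_valid (((Denumerable.eqv (ℚ × ℚ × ℕ)).symm n).1,
      ((Denumerable.eqv (ℚ × ℚ × ℕ)).symm n).2.1)
    simpa using this
  · rw [eq_univ_iff_forall]
    intro g
    obtain ⟨j, hj⟩ := Bset_covers L f₀ g
    rw [mem_iUnion]
    refine ⟨(Denumerable.eqv (ℚ × ℚ × ℕ)) (0, 1, j), ?_⟩
    simp only [Equiv.symm_apply_apply]
    have hv : vp ((0 : ℚ), (1 : ℚ)) = ((0 : ℚ), (1 : ℚ)) :=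
      vp_of_valid ⟨by norm_num, by norm_num, by norm_num⟩
    simpa [hv] using hj
  · intro C hC
    obtain ⟨q, r, j, hval, hsub⟩ := Bset_swallows L hLc hLne f₀ hf₀c hLr hLmin C hC
    refine ⟨(Denumerable.eqv (ℚ × ℚ × ℕ)) (q, r, j), ?_⟩
    simp only [Equiv.symm_apply_apply]
    simpa [vp_of_valid hval] using hsub


end Aux

/-- For any non-scattered compact Hausdorff space `K`, the space `C_p(K)` has property (B). -/
theorem statement13 (K : Type*) [TopologicalSpace K] [CompactSpace K] [T2Space K]
    (h : ¬ Scattered K) :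
    @PropertyB C(K, ℝ) (pointwiseTopology K) := by
  unfold Scattered at h
  push_neg at h
  obtain ⟨S, hSne, hS⟩ := h
  obtain ⟨L, hLc, hLne, hLr, hLmin⟩ := exists_minimal_closed (treeFun S hS hSne)
    (treeFun_continuous S hS hSne) (treeFun_surj S hS hSne)
  exact core L hLc hLne _ (treeFun_continuous S hS hSne) hLr hLmin
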